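/- The lower singular value function is supermultiplicative on ℝ²: for all non-singular linear maps T and U on ℝ² and all 0 ≤ α ≤ 2, Φ̲^α(TU) ≥ Φ̲^α(T) Φ̲^α(U). -/

import Mathlib

open scoped ENNReal Topology

noncomputable section

namespace CodeTreeFractal

/-- The first (largest) singular value of a linear map on `ℝ²`: the operator norm. -/
def sv1 (T : EuclideanSpace ℝ (Fin 2) →L[ℝ] EuclideanSpace ℝ (Fin 2)) : ℝ := ‖T‖

/-- The second (smallest) singular value of a linear map on `ℝ²`: the minimum of
`‖T v‖` over unit vectors `v`. -/
def sv2 (T : EuclideanSpace ℝ (Fin 2) →L[ℝ] EuclideanSpace ℝ (Fin 2)) : ℝ :=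
  sInf {s : ℝ | ∃ v : EuclideanSpace ℝ (Fin 2), ‖v‖ = 1 ∧ s = ‖T v‖}

/-- The singular value function `Φ^α` on `ℝ²`, for `0 ≤ α ≤ 2`. -/
def Phi2 (T : EuclideanSpace ℝ (Fin 2) →L[ℝ] EuclideanSpace ℝ (Fin 2)) (α : ℝ) : ℝ :=
  if α ≤ 1 then sv1 T ^ α else sv1 T * sv2 T ^ (α - 1)

/-- The lower singular value function `Φ̲^α` on `ℝ²`, for `0 ≤ α ≤ 2`. -/
def PhiLow2 (T : EuclideanSpace ℝ (Fin 2) →L[ℝ] EuclideanSpace ℝ (Fin 2)) (α : ℝ) : ℝ :=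
  if α ≤ 1 then sv2 T ^ α else sv2 T * sv1 T ^ (α - 1)

/-! ### Auxiliary material -/

set_option maxHeartbeats 2000000
set_option synthInstance.maxHeartbeats 1000000

open Matrix

local notation "E2" => EuclideanSpace ℝ (Fin 2)

lemma svSet_nonempty (T : E2 →L[ℝ] E2) :
    Set.Nonempty {s : ℝ | ∃ v : E2, ‖v‖ = 1 ∧ s = ‖T v‖} :=
  ⟨‖T (EuclideanSpace.single 0 1)‖, EuclideanSpace.single 0 1, by simp, rfl⟩

lemma svSet_bdd (T : E2 →L[ℝ] E2) :
    BddBelow {s : ℝ | ∃ v : E2, ‖v‖ = 1 ∧ s = ‖T v‖} :=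
  ⟨0, by rintro s ⟨v, _, rfl⟩; exact norm_nonneg _⟩

lemma sv2_nonneg (T : E2 →L[ℝ] E2) : 0 ≤ sv2 T :=
  le_csInf (svSet_nonempty T) (by rintro s ⟨v, _, rfl⟩; exact norm_nonneg _)

lemma sv2_le (T : E2 →L[ℝ] E2) {v : E2} (hv : ‖v‖ = 1) : sv2 T ≤ ‖T v‖ :=
  csInf_le (svSet_bdd T) ⟨v, hv, rfl⟩

lemma le_sv2 (T : E2 →L[ℝ] E2) {c : ℝ} (h : ∀ v : E2, ‖v‖ = 1 → c ≤ ‖T v‖) :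
    c ≤ sv2 T :=
  le_csInf (svSet_nonempty T) (by rintro s ⟨v, hv, rfl⟩; exact h v hv)

lemma sv2_mul_norm_le (T : E2 →L[ℝ] E2) (w : E2) : sv2 T * ‖w‖ ≤ ‖T w‖ := by
  rcases eq_or_ne w 0 with rfl | hw
  · simp
  · have hnw : (0:ℝ) < ‖w‖ := norm_pos_iff.mpr hw
    have hv : ‖(‖w‖⁻¹ • w : E2)‖ = 1 := by
      rw [norm_smul, norm_inv, norm_norm, inv_mul_cancel₀ hnw.ne']
    have h := sv2_le T hv
    rw [_root_.map_smul, norm_smul, norm_inv, norm_norm] at h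
    calc sv2 T * ‖w‖ ≤ (‖w‖⁻¹ * ‖T w‖) * ‖w‖ := by
          exact mul_le_mul_of_nonneg_right h hnw.le
      _ = ‖T w‖ := by field_simp
      
lemma sv2_comp (T U : E2 →L[ℝ] E2) : sv2 T * sv2 U ≤ sv2 (T.comp U) := by
  apply le_sv2
  intro v hv
  have h1 : sv2 T * sv2 U ≤ sv2 T * ‖U v‖ :=
    mul_le_mul_of_nonneg_left (sv2_le U hv) (sv2_nonneg T)
  have h2 : sv2 T * ‖U v‖ ≤ ‖T (U v)‖ := sv2_mul_norm_le T (U v)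
  simpa using h1.trans h2

lemma norm_pos_of_right_inverse (T S : E2 →L[ℝ] E2) (hTS : ∀ x, T (S x) = x) :
    0 < ‖T‖ := by
  rw [norm_pos_iff]
  intro h
  have hx : (EuclideanSpace.single 0 1 : E2) = 0 := by
    rw [← hTS (EuclideanSpace.single 0 1), h]; simp
  have : ‖(EuclideanSpace.single 0 1 : E2)‖ = 1 := by simp
  rw [hx] at this; simp at this

lemma sv2_eq_inv_norm (T S : E2 →L[ℝ] E2) (hST : ∀ x, S (T x) = x)
    (hTS : ∀ x, T (S x) = x) : sv2 T = ‖S‖⁻¹ := by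
  have hS : (0:ℝ) < ‖S‖ := norm_pos_of_right_inverse S T hST
  have hge : ‖S‖⁻¹ ≤ sv2 T := by
    apply le_sv2
    intro v hv
    have h1 : (1:ℝ) ≤ ‖S‖ * ‖T v‖ := by
      calc (1:ℝ) = ‖v‖ := hv.symm
        _ = ‖S (T v)‖ := by rw [hST]
        _ ≤ ‖S‖ * ‖T v‖ := S.le_opNorm _
    rw [inv_eq_one_div, div_le_iff₀ hS]
    linarith [mul_comm ‖S‖ ‖T v‖]
  have hsv2 : (0:ℝ) < sv2 T := lt_of_lt_of_le (inv_pos.mpr hS) hge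
  have hle : ‖S‖ ≤ (sv2 T)⁻¹ := by
    apply ContinuousLinearMap.opNorm_le_bound _ (inv_nonneg.mpr hsv2.le)
    intro x
    have h := sv2_mul_norm_le T (S x)
    rw [hTS] at h
    calc ‖S x‖ = (sv2 T)⁻¹ * (sv2 T * ‖S x‖) := by field_simp
      _ ≤ (sv2 T)⁻¹ * ‖x‖ := mul_le_mul_of_nonneg_left h (inv_nonneg.mpr hsv2.le)
  have : sv2 T ≤ ‖S‖⁻¹ := by
    rw [← inv_inv (sv2 T)]
    exact inv_anti₀ hS hle
  exact le_antisymm this hge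

lemma exists_inverse (T : E2 →L[ℝ] E2) (hT : Function.Injective T) :
    ∃ S : E2 →L[ℝ] E2, (∀ x, S (T x) = x) ∧ (∀ x, T (S x) = x) := by
  have hTl : Function.Injective (T : E2 →ₗ[ℝ] E2) := hT
  have hsurj : Function.Surjective (T : E2 →ₗ[ℝ] E2) :=
    LinearMap.injective_iff_surjective.mp hTl
  let e := LinearEquiv.ofBijective (T : E2 →ₗ[ℝ] E2) ⟨hTl, hsurj⟩
  refine ⟨LinearMap.toContinuousLinearMap (e.symm : E2 →ₗ[ℝ] E2), ?_, ?_⟩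
  · intro x; exact e.symm_apply_apply x
  · intro x; exact e.apply_symm_apply x

/-- determinant of a continuous linear map on `ℝ²` via its matrix. -/
def detc (T : E2 →L[ℝ] E2) : ℝ :=
  ((Matrix.toEuclideanCLM (𝕜 := ℝ) (n := Fin 2)).symm T).det

lemma detc_comp (T U : E2 →L[ℝ] E2) : detc (T.comp U) = detc T * detc U := by
  have : T.comp U = T * U := rfl
  rw [detc, this, _root_.map_mul, Matrix.det_mul]; rfl

/-- a general operator-norm invariance under isometric conjugation. -/
lemma opNorm_conj (u v A : E2 →L[ℝ] E2) (hu : ∀ x, ‖u x‖ = ‖x‖)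
    (hv : ∀ x, ‖v x‖ = ‖x‖) (huv : ∀ x, u (v x) = x) (hvu : ∀ x, v (u x) = x) :
    ‖(u.comp A).comp v‖ = ‖A‖ := by
  apply le_antisymm
  · apply ContinuousLinearMap.opNorm_le_bound _ (norm_nonneg A)
    intro x
    have : ((u.comp A).comp v) x = u (A (v x)) := rfl
    rw [this, hu]
    calc ‖A (v x)‖ ≤ ‖A‖ * ‖v x‖ := A.le_opNorm _
      _ = ‖A‖ * ‖x‖ := by rw [hv]
  · apply ContinuousLinearMap.opNorm_le_bound _ (norm_nonneg _)
    intro x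
    have h1 : A x = v (((u.comp A).comp v) (u x)) := by
      show A x = v (u (A (v (u x))))
      rw [hvu, hvu]
    rw [h1, hv]
    calc ‖((u.comp A).comp v) (u x)‖ ≤ ‖(u.comp A).comp v‖ * ‖u x‖ :=
          ContinuousLinearMap.le_opNorm _ _
      _ = ‖(u.comp A).comp v‖ * ‖x‖ := by rw [hu]

lemma norm_toEuclideanCLM_adjugate (M : Matrix (Fin 2) (Fin 2) ℝ) :
    ‖Matrix.toEuclideanCLM (𝕜 := ℝ) (n := Fin 2) M.adjugate‖ =
      ‖Matrix.toEuclideanCLM (𝕜 := ℝ) (n := Fin 2) M‖ := by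
  set φ := Matrix.toEuclideanCLM (𝕜 := ℝ) (n := Fin 2) with hφ
  have hadj : M.adjugate = !![0,-1;1,0] * star M * !![0,1;-1,0] := by
    have hstar : star M = Mᵀ := by
      ext i j
      rw [Matrix.star_eq_conjTranspose, Matrix.conjTranspose_apply]
      exact star_trivial _
    rw [hstar, Matrix.adjugate_fin_two]
    ext i j
    fin_cases i <;> fin_cases j <;>
      simp [Matrix.mul_apply, Matrix.vecMul, dotProduct, Fin.sum_univ_two]
  have hJJ' : (!![0,-1;1,0] : Matrix (Fin 2) (Fin 2) ℝ) * !![0,1;-1,0] = 1 := by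
    ext i j
    fin_cases i <;> fin_cases j <;>
      simp [Matrix.mul_apply, Matrix.vecMul, dotProduct, Fin.sum_univ_two,
        Matrix.one_apply]
  have hJ'J : (!![0,1;-1,0] : Matrix (Fin 2) (Fin 2) ℝ) * !![0,-1;1,0] = 1 := by
    ext i j
    fin_cases i <;> fin_cases j <;>
      simp [Matrix.mul_apply, Matrix.vecMul, dotProduct, Fin.sum_univ_two,
        Matrix.one_apply]
  have hnormJ : ∀ x : E2, ‖φ !![0,-1;1,0] x‖ = ‖x‖ := by
    intro x
    have h : ∀ i, (φ !![(0:ℝ),-1;1,0] x) i = (!![(0:ℝ),-1;1,0]).mulVec x i := fun _ => rfl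
    rw [EuclideanSpace.norm_eq, EuclideanSpace.norm_eq]
    congr 1
    simp [Fin.sum_univ_two, h, Matrix.mulVec, dotProduct]
    ring
  have hnormJ' : ∀ x : E2, ‖φ !![0,1;-1,0] x‖ = ‖x‖ := by
    intro x
    have h : ∀ i, (φ !![(0:ℝ),1;-1,0] x) i = (!![(0:ℝ),1;-1,0]).mulVec x i := fun _ => rfl
    rw [EuclideanSpace.norm_eq, EuclideanSpace.norm_eq]
    congr 1
    simp [Fin.sum_univ_two, h, Matrix.mulVec, dotProduct]
    ring
  have huv : ∀ x : E2, φ !![0,-1;1,0] (φ !![0,1;-1,0] x) = x := by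
    intro x
    have : φ !![0,-1;1,0] (φ !![0,1;-1,0] x) = (φ (!![0,-1;1,0] * !![0,1;-1,0])) x := by
      rw [_root_.map_mul]; rfl
    rw [this, hJJ', _root_.map_one]; rfl
  have hvu : ∀ x : E2, φ !![0,1;-1,0] (φ !![0,-1;1,0] x) = x := by
    intro x
    have : φ !![0,1;-1,0] (φ !![0,-1;1,0] x) = (φ (!![0,1;-1,0] * !![0,-1;1,0])) x := by
      rw [_root_.map_mul]; rfl
    rw [this, hJ'J, _root_.map_one]; rfl
  have hφadj : φ M.adjugate = ((φ !![0,-1;1,0]).comp (φ (star M))).comp (φ !![0,1;-1,0]) := by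
    rw [hadj, _root_.map_mul, _root_.map_mul]; rfl
  rw [hφadj, opNorm_conj _ _ _ hnormJ hnormJ' huv hvu, StarHomClass.map_star,
    ContinuousLinearMap.star_eq_adjoint]
  exact LinearIsometryEquiv.norm_map _ _

lemma sv1_mul_sv2 (T : E2 →L[ℝ] E2) (hT : Function.Injective T) :
    sv1 T * sv2 T = |detc T| := by
  obtain ⟨S, hST, hTS⟩ := exists_inverse T hT
  set φ := Matrix.toEuclideanCLM (𝕜 := ℝ) (n := Fin 2) with hφ
  set M := φ.symm T with hM
  set N := φ.symm S with hN
  have hTS' : T * S = 1 := ContinuousLinearMap.ext fun x => hTS x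
  have hST' : S * T = 1 := ContinuousLinearMap.ext fun x => hST x
  have hMN : M * N = 1 := by rw [hM, hN, ← _root_.map_mul, hTS', _root_.map_one]
  have hNM : N * M = 1 := by rw [hM, hN, ← _root_.map_mul, hST', _root_.map_one]
  have hdet : M.det * N.det = 1 := by rw [← Matrix.det_mul, hMN, Matrix.det_one]
  have hdet0 : M.det ≠ 0 := fun h => by simp [h] at hdet
  have hadjN : M.adjugate = M.det • N := by
    have h1 : M * M.adjugate = M.det • 1 := Matrix.mul_adjugate M
    calc M.adjugate = (N * M) * M.adjugate := by rw [hNM, one_mul]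
      _ = N * (M * M.adjugate) := by rw [mul_assoc]
      _ = N * (M.det • 1) := by rw [h1]
      _ = M.det • (N * 1) := by rw [Matrix.mul_smul]
      _ = M.det • N := by rw [mul_one]
  have hNval : N = (M.det)⁻¹ • M.adjugate := by
    rw [hadjN, smul_smul, inv_mul_cancel₀ hdet0, one_smul]
  have hSN : S = φ N := (φ.apply_symm_apply S).symm
  have hTM : T = φ M := (φ.apply_symm_apply T).symm
  have hnormS : ‖S‖ = |M.det|⁻¹ * ‖T‖ := by
    have hns := norm_smul M.det⁻¹ (φ M.adjugate)
    calc ‖S‖ = ‖φ N‖ := by rw [← hSN]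
      _ = ‖M.det⁻¹ • φ M.adjugate‖ := by rw [hNval, _root_.map_smul]
      _ = ‖(M.det⁻¹ : ℝ)‖ * ‖φ M.adjugate‖ := hns
      _ = |M.det|⁻¹ * ‖T‖ := by
          rw [Real.norm_eq_abs, abs_inv, norm_toEuclideanCLM_adjugate, ← hTM]
  have hsv2 : sv2 T = ‖S‖⁻¹ := sv2_eq_inv_norm T S hST hTS
  have hTpos : (0:ℝ) < ‖T‖ := norm_pos_of_right_inverse T S hTS
  have hdabs : (0:ℝ) < |M.det| := abs_pos.mpr hdet0
  have hdetc : detc T = M.det := rfl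
  rw [sv1, hsv2, hnormS, hdetc]
  field_simp

lemma sv2_pos (T : E2 →L[ℝ] E2) (hT : Function.Injective T) : 0 < sv2 T := by
  obtain ⟨S, hST, hTS⟩ := exists_inverse T hT
  rw [sv2_eq_inv_norm T S hST hTS]
  exact inv_pos.mpr (norm_pos_of_right_inverse S T hST)

lemma sv1_pos (T : E2 →L[ℝ] E2) (hT : Function.Injective T) : 0 < sv1 T := by
  obtain ⟨S, hST, hTS⟩ := exists_inverse T hT
  exact norm_pos_of_right_inverse T S hTS

/-- rewriting the `α > 1` branch of the lower singular value function. -/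
lemma philow_rewrite (T : E2 →L[ℝ] E2) (hT : Function.Injective T) {α : ℝ}
    (h1 : 1 < α) :
    sv2 T * sv1 T ^ (α - 1) = sv2 T ^ (2 - α) * |detc T| ^ (α - 1) := by
  have h2 := sv2_pos T hT
  have h1' := sv1_pos T hT
  rw [← sv1_mul_sv2 T hT, Real.mul_rpow h1'.le h2.le]
  rw [show (2:ℝ) - α = 1 - (α - 1) by ring, Real.rpow_sub h2, Real.rpow_one]
  field_simp [(Real.rpow_pos_of_pos h2 (α-1)).ne']

/-- Remark `lowerpressure`: the lower singular value function is
supermultiplicative on `ℝ²`: `Φ̲^α(TU) ≥ Φ̲^α(T) Φ̲^α(U)` for `0 ≤ α ≤ 2`. -/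
theorem statement15
    (T U : EuclideanSpace ℝ (Fin 2) →L[ℝ] EuclideanSpace ℝ (Fin 2))
    (hT : Function.Injective T) (hU : Function.Injective U)
    (α : ℝ) (hα0 : 0 ≤ α) (hα2 : α ≤ 2) :
    PhiLow2 T α * PhiLow2 U α ≤ PhiLow2 (T.comp U) α := by
  have hTU : Function.Injective (T.comp U) := by
    have : ⇑(T.comp U) = ⇑T ∘ ⇑U := by ext x; rfl
    rw [this]; exact hT.comp hU
  have hab : sv2 T * sv2 U ≤ sv2 (T.comp U) := sv2_comp T U
  have haT := sv2_pos T hT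
  have haU := sv2_pos U hU
  by_cases hα1 : α ≤ 1
  · rw [PhiLow2, PhiLow2, PhiLow2, if_pos hα1, if_pos hα1, if_pos hα1]
    rw [← Real.mul_rpow haT.le haU.le]
    exact Real.rpow_le_rpow (by positivity) hab hα0
  · push_neg at hα1
    rw [PhiLow2, PhiLow2, PhiLow2, if_neg (not_le.mpr hα1), if_neg (not_le.mpr hα1),
      if_neg (not_le.mpr hα1)]
    rw [philow_rewrite T hT hα1, philow_rewrite U hU hα1, philow_rewrite _ hTU hα1]
    have hdet : |detc (T.comp U)| = |detc T| * |detc U| := by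
      rw [detc_comp, abs_mul]
    rw [hdet]
    calc sv2 T ^ (2 - α) * |detc T| ^ (α - 1) * (sv2 U ^ (2 - α) * |detc U| ^ (α - 1))
        = (sv2 T * sv2 U) ^ (2 - α) * (|detc T| ^ (α - 1) * |detc U| ^ (α - 1)) := by
          rw [Real.mul_rpow haT.le haU.le]; ring
      _ ≤ sv2 (T.comp U) ^ (2 - α) * (|detc T| ^ (α - 1) * |detc U| ^ (α - 1)) := by
          apply mul_le_mul_of_nonneg_right
          · exact Real.rpow_le_rpow (by positivity) hab (by linarith)
          · positivity
      _ = sv2 (T.comp U) ^ (2 - α) * (|detc T| * |detc U|) ^ (α - 1) := by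
          rw [Real.mul_rpow (abs_nonneg _) (abs_nonneg _)]

end CodeTreeFractal
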